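/- arXiv:2209.08513 — 2 statements merged into one kernel-verified Lean document; each statement's English description precedes it below -/
import Mathlib

section
/- For all x > 0, the modified Bessel function of the second kind of order zero satisfies K₀(x) ≤ √(π/(2x))·e^{−x}. -/
open MeasureTheory Real Set

/-- The modified Bessel function of the second kind of order zero,
`K₀(x) = ∫₀^∞ exp(-x cosh t) dt`. -/
noncomputable def K0 (x : ℝ) : ℝ := ∫ t in Set.Ioi (0:ℝ), Real.exp (-x * Real.cosh t)

lemma cosh_lb (t : ℝ) (ht : 0 ≤ t) : 1 + t ^ 2 / 2 ≤ Real.cosh t := by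
  have hmono : MonotoneOn (fun s => Real.cosh s - (1 + s ^ 2 / 2)) (Set.Ici (0:ℝ)) := by
    apply monotoneOn_of_deriv_nonneg (convex_Ici 0)
    · exact ((Real.continuous_cosh.sub (by continuity)).continuousOn)
    · intro s hs
      exact (Real.differentiable_cosh s).sub
        ((differentiableAt_const (1:ℝ)).add ((differentiableAt_pow 2).div_const 2)) |>.differentiableWithinAt
    · intro s hs
      rw [interior_Ici] at hs
      have : deriv (fun s => Real.cosh s - (1 + s ^ 2 / 2)) s = Real.sinh s - s := by
        have h1 : HasDerivAt (fun s : ℝ => Real.cosh s - (1 + s ^ 2 / 2))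
            (Real.sinh s - (0 + 2 * s ^ 1 / 2)) s := by
          exact (Real.hasDerivAt_cosh s).sub
            ((hasDerivAt_const s (1:ℝ)).add (((hasDerivAt_pow 2 s)).div_const 2))
        simpa using h1.deriv
      rw [this, sub_nonneg]
      exact (Real.self_le_sinh_iff.mpr hs.le)
  have := hmono (self_mem_Ici) (mem_Ici.mpr ht) ht
  simp only [Real.cosh_zero] at this
  linarith

/-- For all `x > 0`, `K₀(x) ≤ √(π/(2x)) e^{-x}`. -/
theorem stmt3 : ∀ x : ℝ, 0 < x → K0 x ≤ Real.sqrt (π / (2 * x)) * Real.exp (-x) := by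
  intro x hx
  have hb : 0 < x / 2 := by linarith
  -- the dominating function
  set g : ℝ → ℝ := fun t => Real.exp (-x) * Real.exp (-(x / 2) * t ^ 2) with hg
  have hgint : Integrable g := ((integrable_exp_neg_mul_sq hb).const_mul _)
  have hbound : ∀ t ∈ Set.Ioi (0:ℝ), Real.exp (-x * Real.cosh t) ≤ g t := by
    intro t ht
    have h1 : 1 + t ^ 2 / 2 ≤ Real.cosh t := cosh_lb t (le_of_lt ht)
    have h2 : -x * Real.cosh t ≤ -x + -(x / 2) * t ^ 2 := by nlinarith
    rw [hg]
    calc Real.exp (-x * Real.cosh t) ≤ Real.exp (-x + -(x / 2) * t ^ 2) :=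
          Real.exp_le_exp.mpr h2
      _ = Real.exp (-x) * Real.exp (-(x / 2) * t ^ 2) := Real.exp_add _ _
  have hfint : IntegrableOn (fun t => Real.exp (-x * Real.cosh t)) (Set.Ioi (0:ℝ)) := by
    apply (hgint.restrict (s := Set.Ioi (0:ℝ))).mono'
    · exact (Real.continuous_exp.comp (by continuity)).aestronglyMeasurable
    · filter_upwards [ae_restrict_mem measurableSet_Ioi] with t ht
      rw [Real.norm_eq_abs, abs_of_pos (Real.exp_pos _)]
      exact hbound t ht
  have hmono : K0 x ≤ ∫ t in Set.Ioi (0:ℝ), g t := by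
    apply setIntegral_mono_on hfint (hgint.restrict) measurableSet_Ioi hbound
  calc K0 x ≤ ∫ t in Set.Ioi (0:ℝ), g t := hmono
    _ = Real.exp (-x) * ∫ t in Set.Ioi (0:ℝ), Real.exp (-(x / 2) * t ^ 2) := by
        rw [integral_const_mul]
    _ = Real.exp (-x) * (Real.sqrt (π / (x / 2)) / 2) := by
        rw [integral_gaussian_Ioi]
    _ = Real.sqrt (π / (2 * x)) * Real.exp (-x) := by
        have h4 : Real.sqrt 4 = 2 := by
          rw [show (4:ℝ) = 2 ^ 2 by norm_num]
          exact Real.sqrt_sq (by norm_num)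
        rw [show π / (2 * x) = (π / (x / 2)) / 4 by field_simp; ring,
          Real.sqrt_div (by positivity) 4, h4]
        ring
end

section
/- Let X₁, …, X_M be i.i.d. nonnegative random variables each with density f(x) = 4x·K₀(2x), where M is an even positive integer and L = M/2. Then for every τ ≥ 0, P(∑_{m=1}^M X_m < τ) ≤ [2^{−L}·π^{M/2}·Γ(3/2)^M / (3L−1)!]·γ(3L, 2τ), where γ(s,x) = ∫₀^x t^{s−1}e^{−t} dt is the lower incomplete Gamma function. -/
open MeasureTheory ProbabilityTheory Real Set

/-- The lower incomplete Gamma function `γ(s, x) = ∫₀ˣ t^{s-1} e^{-t} dt`. -/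
noncomputable def lincGamma (s x : ℝ) : ℝ := ∫ t in (0:ℝ)..x, t ^ (s - 1) * Real.exp (-t)

lemma cosh_ge (t : ℝ) : 1 + t^2/2 ≤ Real.cosh t := by
  have h1 : Real.cosh t = 1 + 2 * Real.sinh (t/2) ^ 2 := by
    have h0 := Real.cosh_two_mul (t/2)
    have h2 := Real.cosh_sq (t/2)
    rw [show 2 * (t/2) = t by ring] at h0
    rw [h0, h2]; ring
  have key : ∀ u : ℝ, u^2 ≤ Real.sinh u ^ 2 := by
    intro u
    rcases lt_trichotomy u 0 with h|rfl|h
    · have h3 := Real.self_lt_sinh_iff.2 (show 0 < -u by linarith)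
      rw [Real.sinh_neg] at h3; nlinarith
    · simp
    · have h3 := Real.self_lt_sinh_iff.2 h; nlinarith
  have := key (t/2); rw [h1]; nlinarith

lemma K0_le {z : ℝ} (hz : 0 < z) : K0 z ≤ Real.sqrt (π/(2*z)) * Real.exp (-z) := by
  have hInt : Integrable (fun t : ℝ => Real.exp (-z) * Real.exp (-(z/2) * t^2))
      (volume.restrict (Set.Ioi (0:ℝ))) :=
    (((integrable_exp_neg_mul_sq (by linarith : (0:ℝ) < z/2)).const_mul _).restrict)
  have hmono : K0 z ≤ ∫ t in Set.Ioi (0:ℝ), Real.exp (-z) * Real.exp (-(z/2) * t^2) := by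
    refine integral_mono_of_nonneg (Filter.Eventually.of_forall fun t => (Real.exp_pos _).le)
      hInt (Filter.Eventually.of_forall fun t => ?_)
    show Real.exp (-z * Real.cosh t) ≤ Real.exp (-z) * Real.exp (-(z/2)*t^2)
    rw [← Real.exp_add]
    apply Real.exp_le_exp.2
    have := cosh_ge t
    nlinarith
  calc K0 z ≤ _ := hmono
    _ = Real.exp (-z) * ∫ t in Set.Ioi (0:ℝ), Real.exp (-(z/2) * t^2) := by
        rw [MeasureTheory.integral_const_mul]
    _ = Real.exp (-z) * (Real.sqrt (π/(z/2)) / 2) := by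
        rw [integral_gaussian_Ioi]
    _ = Real.sqrt (π/(2*z)) * Real.exp (-z) := by
        have h4 : π/(z/2) = 2^2*(π/(2*z)) := by field_simp
        rw [h4, Real.sqrt_mul (by positivity), Real.sqrt_sq (by norm_num)]; ring

lemma f_le {x : ℝ} (hx : 0 < x) :
    4*x*K0 (2*x) ≤ 2*Real.sqrt π * (x ^ ((3:ℝ)/2 - 1) * Real.exp (-2*x)) := by
  have h1 := K0_le (by linarith : (0:ℝ) < 2*x)
  have h2 : Real.sqrt (π/(2*(2*x))) = Real.sqrt π / (2 * Real.sqrt x) := by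
    rw [show π/(2*(2*x)) = π/(4*x) by ring, Real.sqrt_div Real.pi_pos.le,
      Real.sqrt_mul (by norm_num : (0:ℝ) ≤ 4),
      show Real.sqrt 4 = 2 by rw [show (4:ℝ)=2^2 by norm_num, Real.sqrt_sq (by norm_num)]]
  have h3 : x ^ ((3:ℝ)/2 - 1) = Real.sqrt x := by
    rw [show (3:ℝ)/2 - 1 = 1/2 by norm_num, ← Real.sqrt_eq_rpow]
  rw [h2] at h1
  rw [h3]
  have hsx : 0 < Real.sqrt x := Real.sqrt_pos.2 hx
  have hsq : Real.sqrt x * Real.sqrt x = x := Real.mul_self_sqrt hx.le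
  have h4 : 4*x*K0 (2*x) ≤ 4*x*(Real.sqrt π / (2 * Real.sqrt x) * Real.exp (-(2*x))) := by
    apply mul_le_mul_of_nonneg_left h1 (by linarith)
  calc 4*x*K0 (2*x) ≤ _ := h4
    _ = 2*Real.sqrt π * (x / Real.sqrt x * Real.exp (-2*x)) := by
        rw [show -(2*x) = -2*x by ring]
        field_simp
        ring
    _ = 2*Real.sqrt π * (Real.sqrt x * Real.exp (-2*x)) := by rw [Real.div_sqrt]

lemma beta01 {a b : ℝ} (ha : 0 < a) (hb : 0 < b) :
    ∫ y in (0:ℝ)..1, y^(a-1)*(1-y)^(b-1)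
      = Real.Gamma a * Real.Gamma b / Real.Gamma (a+b) := by
  have hG := Complex.Gamma_mul_Gamma_eq_betaIntegral
    (s := (a:ℂ)) (t := (b:ℂ)) (by simpa using ha) (by simpa using hb)
  have hBeta : Complex.betaIntegral a b = ((∫ y in (0:ℝ)..1, y^(a-1)*(1-y)^(b-1) : ℝ) : ℂ) := by
    rw [Complex.betaIntegral]
    rw [← intervalIntegral.integral_ofReal]
    refine intervalIntegral.integral_congr fun x hx => ?_
    rw [uIcc_of_le (by norm_num : (0:ℝ) ≤ 1)] at hx
    rw [Complex.ofReal_mul, Complex.ofReal_cpow hx.1, Complex.ofReal_cpow (by linarith [hx.2] : (0:ℝ) ≤ 1 - x)]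
    push_cast
    ring
  rw [hBeta] at hG
  have : ((Real.Gamma a * Real.Gamma b : ℝ) : ℂ)
      = ((Real.Gamma (a+b) * ∫ y in (0:ℝ)..1, y^(a-1)*(1-y)^(b-1) : ℝ) : ℂ) := by
    push_cast
    rw [Complex.Gamma_ofReal, Complex.Gamma_ofReal, ← Complex.ofReal_add, Complex.Gamma_ofReal] at *
    exact hG
  have h2 := Complex.ofReal_inj.1 this
  have hGpos : 0 < Real.Gamma (a+b) := Real.Gamma_pos_of_pos (by positivity)
  field_simp
  linarith [h2]

lemma betaScaled {a b u : ℝ} (ha : 0 < a) (hb : 0 < b) (hu : 0 < u) :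
    ∫ y in (0:ℝ)..u, y^(a-1)*(u-y)^(b-1)
      = Real.Gamma a * Real.Gamma b / Real.Gamma (a+b) * u^(a+b-1) := by
  have h := intervalIntegral.integral_comp_mul_left
    (fun y => y^(a-1)*(u-y)^(b-1)) (ne_of_gt hu) (a := 0) (b := 1)
  simp only [mul_zero, mul_one, smul_eq_mul] at h
  have h2 : ∫ y in (0:ℝ)..u, y^(a-1)*(u-y)^(b-1)
      = u * ∫ x in (0:ℝ)..1, (u*x)^(a-1)*(u-u*x)^(b-1) := by
    rw [h]; field_simp
  have hcg : ∀ x ∈ Set.uIcc (0:ℝ) 1, (u*x)^(a-1)*(u-u*x)^(b-1)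
      = u^(a+b-2) * (x^(a-1)*(1-x)^(b-1)) := by
    intro x hx
    rw [uIcc_of_le (by norm_num : (0:ℝ) ≤ 1)] at hx
    rw [show u - u*x = u*(1-x) by ring, Real.mul_rpow hu.le hx.1,
      Real.mul_rpow hu.le (by linarith [hx.2]),
      show u^(a-1) * x^(a-1) * (u^(b-1) * (1-x)^(b-1)) = (u^(a-1)*u^(b-1)) * (x^(a-1)*(1-x)^(b-1)) by ring,
      ← Real.rpow_add hu, show a-1+(b-1) = a+b-2 by ring]
  rw [h2, intervalIntegral.integral_congr hcg, intervalIntegral.integral_const_mul, beta01 ha hb,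
    show a+b-1 = 1+(a+b-2) by ring, Real.rpow_add hu, Real.rpow_one]
  ring

noncomputable def FK (a : ℝ) : ℝ → ENNReal :=
  fun u => ENNReal.ofReal (u ^ (a-1) * Real.exp (-2*u))

noncomputable def Phi (a τ : ℝ) : ENNReal := ∫⁻ u in Ioc (0:ℝ) τ, FK a u

lemma cont_rpow {c : ℝ} (hc : 0 ≤ c) : Continuous fun x : ℝ => x ^ c :=
  continuous_iff_continuousAt.2 fun x => Real.continuousAt_rpow_const x c (Or.inr hc)

lemma FK_meas (a : ℝ) (ha : 1 ≤ a) : Measurable (FK a) :=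
  (((cont_rpow (by linarith : (0:ℝ) ≤ a - 1)).mul
    (Real.continuous_exp.comp (continuous_const.mul continuous_id))).measurable).ennreal_ofReal

lemma Phi_mono (a : ℝ) : Monotone (Phi a) :=
  fun _ _ h => lintegral_mono_set (Ioc_subset_Ioc_right h)

lemma Phi_shift (a τ y : ℝ) :
    Phi a (τ - y) = ∫⁻ s, (Ioc y τ).indicator (fun s => FK a (s - y)) s := by
  rw [Phi, ← lintegral_indicator measurableSet_Ioc]
  rw [← lintegral_add_right_eq_self
    (fun s => (Ioc (0:ℝ) (τ-y)).indicator (FK a) s) (-y)]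
  refine lintegral_congr fun s => ?_
  have hmem : s + -y ∈ Ioc 0 (τ - y) ↔ s ∈ Ioc y τ := by
    simp only [mem_Ioc]
    constructor <;> intro h <;> constructor <;> linarith [h.1, h.2]
  by_cases hs : s ∈ Ioc y τ
  · rw [indicator_of_mem hs, indicator_of_mem (hmem.2 hs), sub_eq_add_neg]
  · rw [indicator_of_notMem hs, indicator_of_notMem (fun c => hs (hmem.1 c))]

lemma conv {a τ : ℝ} (ha : 1 < a) :
    ∫⁻ y in Ioi (0:ℝ), FK (3/2) y * Phi a (τ - y)
      = ENNReal.ofReal (Real.Gamma (3/2) * Real.Gamma a / Real.Gamma (a + 3/2))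
        * Phi (a + 3/2) τ := by
  set A : Set (ℝ×ℝ) := {p | 0 < p.1 ∧ p.1 < p.2 ∧ p.2 ≤ τ} with hA
  have hAmeas : MeasurableSet A := by
    have h1 : A = {p : ℝ×ℝ | 0 < p.1} ∩ ({p | p.1 < p.2} ∩ {p | p.2 ≤ τ}) := by
      ext p; simp [hA, and_assoc]
    rw [h1]
    exact (measurableSet_lt measurable_const measurable_fst).inter
      ((measurableSet_lt measurable_fst measurable_snd).inter
        (measurableSet_le measurable_snd measurable_const))
  set g : ℝ×ℝ → ENNReal := fun p =>
    ENNReal.ofReal (p.1 ^ ((3:ℝ)/2-1) * ((p.2-p.1) ^ (a-1) * Real.exp (-2*p.2))) with hg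
  have hgmeas : Measurable g := by
    apply Measurable.ennreal_ofReal
    exact (((cont_rpow (by norm_num : (0:ℝ) ≤ 3/2-1)).comp continuous_fst).mul
      (((cont_rpow (by linarith : (0:ℝ) ≤ a-1)).comp (continuous_snd.sub continuous_fst)).mul
        (Real.continuous_exp.comp (continuous_const.mul continuous_snd)))).measurable
  set W : ℝ → ℝ → ENNReal := fun y s => A.indicator g (y, s) with hW
  have hWdef : ∀ y s, W y s = A.indicator g (y, s) := fun _ _ => rfl
  have hgdef : ∀ p : ℝ×ℝ, g p
      = ENNReal.ofReal (p.1 ^ ((3:ℝ)/2-1) * ((p.2-p.1) ^ (a-1) * Real.exp (-2*p.2))) :=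
    fun _ => rfl
  -- step 1 : rewrite LHS as double integral
  have step1 : ∫⁻ y in Ioi (0:ℝ), FK (3/2) y * Phi a (τ - y) = ∫⁻ y, ∫⁻ s, W y s := by
    rw [← lintegral_indicator measurableSet_Ioi]
    refine lintegral_congr fun y => ?_
    by_cases hy : y ∈ Ioi (0:ℝ)
    · rw [indicator_of_mem hy, Phi_shift,
        ← lintegral_const_mul' _ _ (by exact ENNReal.ofReal_ne_top)]
      refine lintegral_congr fun s => ?_
      by_cases hs : s ∈ Ioc y τ
      · rw [indicator_of_mem hs, hWdef]
        have hmemA : (y, s) ∈ A := ⟨hy, hs.1, hs.2⟩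
        rw [indicator_of_mem hmemA, hgdef, FK, FK]
        rw [← ENNReal.ofReal_mul
          (mul_nonneg (Real.rpow_nonneg (le_of_lt hy) _) (Real.exp_pos _).le)]
        congr 1
        have h1 : Real.exp (-2*y) * Real.exp (-2*(s-y)) = Real.exp (-2*s) := by
          rw [← Real.exp_add]; ring_nf
        calc y ^ ((3:ℝ)/2-1) * Real.exp (-2*y) * ((s-y) ^ (a-1) * Real.exp (-2*(s-y)))
            = y ^ ((3:ℝ)/2-1) * ((s-y) ^ (a-1) * (Real.exp (-2*y) * Real.exp (-2*(s-y)))) := by ring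
          _ = y ^ ((3:ℝ)/2-1) * ((s-y) ^ (a-1) * Real.exp (-2*s)) := by rw [h1]
      · rw [indicator_of_notMem hs, hWdef, indicator_of_notMem, mul_zero]
        intro hc
        exact hs ⟨hc.2.1, hc.2.2⟩
    · rw [indicator_of_notMem hy]
      symm
      have hmy : Measurable (fun s => W y s) :=
        (hgmeas.indicator hAmeas).comp (measurable_const.prodMk measurable_id)
      rw [lintegral_eq_zero_iff hmy]
      refine Filter.Eventually.of_forall fun s => ?_
      show W y s = 0
      rw [hWdef, indicator_of_notMem]
      intro hc; exact hy hc.1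
  -- step 2 : swap
  have step2 : ∫⁻ y, ∫⁻ s, W y s = ∫⁻ s, ∫⁻ y, W y s :=
    lintegral_lintegral_swap ((hgmeas.indicator hAmeas).aemeasurable)
  -- step 3 : inner integral
  have hB : 0 ≤ Real.Gamma (3/2) * Real.Gamma a / Real.Gamma (a + 3/2) := by
    have := Real.Gamma_pos_of_pos (by norm_num : (0:ℝ) < 3/2)
    have := Real.Gamma_pos_of_pos (by linarith : (0:ℝ) < a)
    have := Real.Gamma_pos_of_pos (by linarith : (0:ℝ) < a + 3/2)
    positivity
  have step3 : ∀ s : ℝ, ∫⁻ y, W y s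
      = (Ioc (0:ℝ) τ).indicator (fun s =>
          ENNReal.ofReal (Real.Gamma (3/2) * Real.Gamma a / Real.Gamma (a + 3/2))
            * FK (a + 3/2) s) s := by
    intro s
    by_cases hs : s ∈ Ioc (0:ℝ) τ
    · rw [indicator_of_mem hs]
      have hW2 : ∀ y, W y s
          = (Ioo (0:ℝ) s).indicator (fun y =>
              ENNReal.ofReal (y ^ ((3:ℝ)/2-1) * ((s-y) ^ (a-1) * Real.exp (-2*s)))) y := by
        intro y
        by_cases hy : y ∈ Ioo (0:ℝ) s
        · rw [indicator_of_mem hy, hWdef,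
            indicator_of_mem (show (y,s) ∈ A from ⟨hy.1, hy.2, hs.2⟩), hgdef]
        · rw [indicator_of_notMem hy, hWdef, indicator_of_notMem]
          intro hc; exact hy ⟨hc.1, hc.2.1⟩
      simp only [hW2]
      rw [lintegral_indicator measurableSet_Ioo]
      have hcont : Continuous (fun y : ℝ => y ^ ((3:ℝ)/2-1) * ((s-y) ^ (a-1) * Real.exp (-2*s))) :=
        ((cont_rpow (by norm_num : (0:ℝ) ≤ 3/2-1)).mul
          (((cont_rpow (by linarith : (0:ℝ) ≤ a-1)).comp (continuous_const.sub continuous_id)).mul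
            continuous_const))
      have hint : IntegrableOn (fun y : ℝ => y ^ ((3:ℝ)/2-1) * ((s-y) ^ (a-1) * Real.exp (-2*s)))
          (Ioo (0:ℝ) s) volume :=
        (hcont.integrableOn_Ioc).mono_set Ioo_subset_Ioc_self
      rw [← ofReal_integral_eq_lintegral_ofReal hint]
      · have h0s : (0:ℝ) < s := hs.1
        have : ∫ y in Ioo (0:ℝ) s, y ^ ((3:ℝ)/2-1) * ((s-y) ^ (a-1) * Real.exp (-2*s))
            = ∫ y in (0:ℝ)..s, y ^ ((3:ℝ)/2-1) * ((s-y) ^ (a-1) * Real.exp (-2*s)) := by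
          rw [intervalIntegral.integral_of_le h0s.le, integral_Ioc_eq_integral_Ioo]
        rw [this]
        have : ∫ y in (0:ℝ)..s, y ^ ((3:ℝ)/2-1) * ((s-y) ^ (a-1) * Real.exp (-2*s))
            = (∫ y in (0:ℝ)..s, y ^ ((3:ℝ)/2-1) * (s-y) ^ (a-1)) * Real.exp (-2*s) := by
          rw [← intervalIntegral.integral_mul_const]
          refine intervalIntegral.integral_congr fun y _ => by ring
        rw [this, betaScaled (by norm_num : (0:ℝ) < 3/2) (by linarith : (0:ℝ) < a) h0s, FK,
          ← ENNReal.ofReal_mul hB]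
        congr 1
        rw [show (3:ℝ)/2 + a = a + 3/2 by ring]
        ring
      · refine (ae_restrict_iff' measurableSet_Ioo).2 (Filter.Eventually.of_forall fun y hy => ?_)
        have := hy.1; have := hy.2
        have h1 : (0:ℝ) ≤ y ^ ((3:ℝ)/2-1) := Real.rpow_nonneg (by linarith) _
        have h2 : (0:ℝ) ≤ (s-y) ^ (a-1) := Real.rpow_nonneg (by linarith) _
        positivity
    · rw [indicator_of_notMem hs]
      have hmy : Measurable (fun y => W y s) :=
        (hgmeas.indicator hAmeas).comp (measurable_id.prodMk measurable_const)
      rw [lintegral_eq_zero_iff hmy]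
      refine Filter.Eventually.of_forall fun y => ?_
      show W y s = 0
      rw [hWdef, indicator_of_notMem]
      intro hc
      rw [mem_Ioc, not_and_or] at hs
      rcases hs with h | h
      · exact h (lt_trans hc.1 hc.2.1)
      · exact h hc.2.2
  rw [step1, step2]
  simp only [step3]
  rw [lintegral_indicator measurableSet_Ioc, Phi]
  rw [lintegral_const_mul' _ _ (by exact ENNReal.ofReal_ne_top)]

lemma K0_meas : Measurable K0 := by
  have h : StronglyMeasurable (fun p : ℝ × ℝ => Real.exp (-p.1 * Real.cosh p.2)) :=
    (Real.continuous_exp.comp ((continuous_fst.neg).mul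
      (Real.continuous_cosh.comp continuous_snd))).stronglyMeasurable
  exact (h.integral_prod_right' (ν := volume.restrict (Ioi (0:ℝ)))).measurable

lemma fdens_meas : Measurable (fun x : ℝ =>
    ENNReal.ofReal ((Set.Ioi (0:ℝ)).indicator (fun y => 4 * y * K0 (2 * y)) x)) := by
  apply Measurable.ennreal_ofReal
  exact ((measurable_const.mul measurable_id).mul
    (K0_meas.comp (measurable_id.const_mul 2))).indicator measurableSet_Ioi

lemma main_bound {Ω : Type} [MeasureSpace Ω] [IsProbabilityMeasure (ℙ : Measure Ω)]
    {M : ℕ} (X : Fin M → Ω → ℝ) (hmeas : ∀ m, Measurable (X m))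
    (hindep : iIndepFun X ℙ)
    (hdens : ∀ m, (ℙ : Measure Ω).map (X m) = volume.withDensity
      (fun x => ENNReal.ofReal ((Set.Ioi (0:ℝ)).indicator (fun y => 4 * y * K0 (2 * y)) x)))
    (s : Finset (Fin M)) (hs : s.Nonempty) :
    ∀ τ : ℝ, ℙ {ω | (∑ m ∈ s, X m ω) < τ}
      ≤ ENNReal.ofReal ((2*Real.sqrt π)^s.card * Real.Gamma (3/2)^s.card
          / Real.Gamma ((3*s.card:ℝ)/2)) * Phi ((3*s.card:ℝ)/2) τ := by
  induction hs using Finset.Nonempty.cons_induction with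
  | singleton a =>
      intro τ
      have hcard : ({a} : Finset (Fin M)).card = 1 := Finset.card_singleton a
      rw [hcard]
      have hset : {ω | (∑ m ∈ ({a} : Finset (Fin M)), X m ω) < τ} = X a ⁻¹' (Iio τ) := by
        ext ω; simp [Finset.sum_singleton, mem_Iio]
      rw [hset, ← Measure.map_apply (hmeas a) measurableSet_Iio, hdens a,
        withDensity_apply _ measurableSet_Iio]
      have hind : (fun x : ℝ => ENNReal.ofReal
            ((Set.Ioi (0:ℝ)).indicator (fun y => 4 * y * K0 (2 * y)) x))
          = (Set.Ioi (0:ℝ)).indicator (fun x => ENNReal.ofReal (4 * x * K0 (2 * x))) := by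
        ext x; by_cases hx : x ∈ Ioi (0:ℝ) <;> simp [hx]
      rw [hind, setLIntegral_indicator measurableSet_Ioi]
      calc ∫⁻ x in Ioi 0 ∩ Iio τ, ENNReal.ofReal (4 * x * K0 (2 * x))
          ≤ ∫⁻ x in Ioi 0 ∩ Iio τ,
              ENNReal.ofReal (2*Real.sqrt π * (x ^ ((3:ℝ)/2-1) * Real.exp (-2*x))) := by
            refine setLIntegral_mono
              ((continuous_const.mul ((cont_rpow (by norm_num : (0:ℝ) ≤ 3/2-1)).mul
                (Real.continuous_exp.comp
                  (continuous_const.mul continuous_id)))).measurable.ennreal_ofReal)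
              fun x hx => ?_
            exact ENNReal.ofReal_le_ofReal (f_le hx.1)
        _ ≤ ∫⁻ x in Ioc 0 τ,
              ENNReal.ofReal (2*Real.sqrt π * (x ^ ((3:ℝ)/2-1) * Real.exp (-2*x))) := by
            refine lintegral_mono_set fun x hx => ⟨hx.1, le_of_lt hx.2⟩
        _ = ENNReal.ofReal (2*Real.sqrt π) * Phi ((3:ℝ)/2) τ := by
            rw [Phi, ← lintegral_const_mul' _ _ (by exact ENNReal.ofReal_ne_top)]
            refine lintegral_congr fun x => ?_
            rw [FK, ← ENNReal.ofReal_mul (by positivity)]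
        _ = ENNReal.ofReal ((2*Real.sqrt π)^1 * Real.Gamma (3/2)^1
              / Real.Gamma ((3*(1:ℕ):ℝ)/2)) * Phi ((3*(1:ℕ):ℝ)/2) τ := by
            have hΓpos : (0:ℝ) < Real.Gamma (3/2) :=
              Real.Gamma_pos_of_pos (by norm_num)
            rw [show ((3*(1:ℕ):ℝ)/2) = (3:ℝ)/2 by norm_num, pow_one, pow_one,
              mul_div_assoc, div_self hΓpos.ne', mul_one]
  | cons a s ha hs ih =>
      intro τ
      set n := s.card with hn
      have hn1 : 1 ≤ n := Finset.card_pos.2 hs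
      have hcard : (Finset.cons a s ha).card = n + 1 := Finset.card_cons ha
      set T : Ω → ℝ := fun ω => ∑ m ∈ s, X m ω with hT
      have hTmeas : Measurable T := Finset.measurable_sum s (fun i _ => hmeas i)
      have hInd : IndepFun (X a) T ℙ := by
        have h := (hindep.indepFun_finset_sum_of_notMem hmeas ha).symm
        have h2 : T = ∑ j ∈ s, X j := by ext ω; rw [hT]; simp [Finset.sum_apply]
        rw [h2]
        exact h
      have hpair : (ℙ : Measure Ω).map (fun ω => (X a ω, T ω)) = ((ℙ : Measure Ω).map (X a)).prod ((ℙ : Measure Ω).map T) :=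
        (indepFun_iff_map_prod_eq_prod_map_map (hmeas a).aemeasurable
          hTmeas.aemeasurable).1 hInd
      have hPmeas : MeasurableSet {p : ℝ×ℝ | p.1 + p.2 < τ} :=
        measurableSet_lt (measurable_fst.add measurable_snd) measurable_const
      have hset : {ω | (∑ m ∈ Finset.cons a s ha, X m ω) < τ}
          = (fun ω => (X a ω, T ω)) ⁻¹' {p : ℝ×ℝ | p.1 + p.2 < τ} := by
        ext ω; simp [Finset.cons_eq_insert, Finset.sum_insert ha, hT]
      haveI : IsProbabilityMeasure ((ℙ : Measure Ω).map T) :=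
        Measure.isProbabilityMeasure_map hTmeas.aemeasurable
      have hslice : ∀ y : ℝ, Prod.mk y ⁻¹' {p : ℝ×ℝ | p.1 + p.2 < τ} = Iio (τ - y) := by
        intro y; ext t
        simp only [mem_preimage, mem_setOf_eq, mem_Iio]
        constructor <;> intro h <;> linarith
      have key1 : ℙ {ω | (∑ m ∈ Finset.cons a s ha, X m ω) < τ}
          = ∫⁻ y, ℙ {ω | T ω < τ - y} ∂((ℙ : Measure Ω).map (X a)) := by
        rw [hset, ← Measure.map_apply ((hmeas a).prodMk hTmeas) hPmeas, hpair,
          Measure.prod_apply hPmeas]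
        refine lintegral_congr fun y => ?_
        rw [hslice y, Measure.map_apply hTmeas measurableSet_Iio]
        rfl
      set a0 : ℝ := (3*(n:ℝ))/2 with ha0
      have ha0gt : 1 < a0 := by
        rw [ha0]
        have : (1:ℝ) ≤ (n:ℝ) := by exact_mod_cast hn1
        linarith
      set c0 : ℝ := (2*Real.sqrt π)^n * Real.Gamma (3/2)^n / Real.Gamma a0 with hc0
      have hΓa0pos : (0:ℝ) < Real.Gamma a0 := Real.Gamma_pos_of_pos (by linarith)
      have hc0nonneg : 0 ≤ c0 := by
        rw [hc0]
        have h1 : (0:ℝ) ≤ 2*Real.sqrt π := by positivity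
        have h2 : (0:ℝ) < Real.Gamma (3/2) := Real.Gamma_pos_of_pos (by norm_num)
        positivity
      have hZmeas : Measurable (fun y : ℝ => ENNReal.ofReal c0 * Phi a0 (τ - y)) := by
        refine measurable_const.mul ?_
        exact Antitone.measurable (fun y1 y2 h => Phi_mono a0 (by linarith))
      have key2 : ∫⁻ y, ℙ {ω | T ω < τ - y} ∂((ℙ : Measure Ω).map (X a))
          ≤ ∫⁻ y, ENNReal.ofReal c0 * Phi a0 (τ - y) ∂((ℙ : Measure Ω).map (X a)) := by
        refine lintegral_mono fun y => ?_
        exact ih (τ - y)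
      have key3 : ∫⁻ y, ENNReal.ofReal c0 * Phi a0 (τ - y) ∂((ℙ : Measure Ω).map (X a))
          = ∫⁻ y, (fun x => ENNReal.ofReal
              ((Set.Ioi (0:ℝ)).indicator (fun u => 4 * u * K0 (2 * u)) x)) y
            * (ENNReal.ofReal c0 * Phi a0 (τ - y)) := by
        rw [hdens a, lintegral_withDensity_eq_lintegral_mul _ fdens_meas hZmeas]
        rfl
      have key4 : ∫⁻ y, (fun x => ENNReal.ofReal
              ((Set.Ioi (0:ℝ)).indicator (fun u => 4 * u * K0 (2 * u)) x)) y
            * (ENNReal.ofReal c0 * Phi a0 (τ - y))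
          ≤ ∫⁻ y, (Set.Ioi (0:ℝ)).indicator
              (fun y => ENNReal.ofReal (2*Real.sqrt π) * FK (3/2) y
                * (ENNReal.ofReal c0 * Phi a0 (τ - y))) y := by
        refine lintegral_mono fun y => ?_
        by_cases hy : y ∈ Ioi (0:ℝ)
        · rw [indicator_of_mem hy]
          refine mul_le_mul_left ?_ _
          show ENNReal.ofReal ((Set.Ioi (0:ℝ)).indicator (fun u => 4 * u * K0 (2 * u)) y)
            ≤ ENNReal.ofReal (2*Real.sqrt π) * FK (3/2) y
          rw [indicator_of_mem hy, FK, ← ENNReal.ofReal_mul (by positivity)]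
          exact ENNReal.ofReal_le_ofReal (f_le hy)
        · rw [indicator_of_notMem hy]
          show ENNReal.ofReal ((Set.Ioi (0:ℝ)).indicator (fun u => 4 * u * K0 (2 * u)) y)
            * (ENNReal.ofReal c0 * Phi a0 (τ - y)) ≤ 0
          rw [indicator_of_notMem hy]
          simp
      have key5 : ∫⁻ y, (Set.Ioi (0:ℝ)).indicator
              (fun y => ENNReal.ofReal (2*Real.sqrt π) * FK (3/2) y
                * (ENNReal.ofReal c0 * Phi a0 (τ - y))) y
          = ENNReal.ofReal (2*Real.sqrt π) * ENNReal.ofReal c0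
            * (ENNReal.ofReal (Real.Gamma (3/2) * Real.Gamma a0 / Real.Gamma (a0 + 3/2))
                * Phi (a0 + 3/2) τ) := by
        rw [lintegral_indicator measurableSet_Ioi, ← conv ha0gt,
          ← lintegral_const_mul' _ _
            (ENNReal.mul_ne_top ENNReal.ofReal_ne_top ENNReal.ofReal_ne_top)]
        refine lintegral_congr fun y => ?_
        ring
      calc ℙ {ω | (∑ m ∈ Finset.cons a s ha, X m ω) < τ}
          = ∫⁻ y, ℙ {ω | T ω < τ - y} ∂((ℙ : Measure Ω).map (X a)) := key1
        _ ≤ ∫⁻ y, ENNReal.ofReal c0 * Phi a0 (τ - y) ∂((ℙ : Measure Ω).map (X a)) := key2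
        _ = _ := key3
        _ ≤ _ := key4
        _ = ENNReal.ofReal (2*Real.sqrt π) * ENNReal.ofReal c0
            * (ENNReal.ofReal (Real.Gamma (3/2) * Real.Gamma a0 / Real.Gamma (a0 + 3/2))
                * Phi (a0 + 3/2) τ) := key5
        _ = ENNReal.ofReal ((2*Real.sqrt π)^(Finset.cons a s ha).card
              * Real.Gamma (3/2)^(Finset.cons a s ha).card
              / Real.Gamma ((3*(Finset.cons a s ha).card:ℝ)/2))
            * Phi ((3*(Finset.cons a s ha).card:ℝ)/2) τ := by
            rw [hcard]
            have hA : a0 + 3/2 = (3*((n+1:ℕ):ℝ))/2 := by rw [ha0]; push_cast; ring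
            rw [← hA]
            rw [← ENNReal.ofReal_mul (by positivity : (0:ℝ) ≤ 2*Real.sqrt π), ← mul_assoc,
              ← ENNReal.ofReal_mul (mul_nonneg (by positivity) hc0nonneg)]
            congr 1
            rw [hc0]
            have h2 : (0:ℝ) < Real.Gamma (3/2) := Real.Gamma_pos_of_pos (by norm_num)
            have h3 : (0:ℝ) < Real.Gamma (a0 + 3/2) := Real.Gamma_pos_of_pos (by linarith)
            field_simp
            ring


lemma Phi_ofReal {a τ : ℝ} (ha : 1 ≤ a) (hτ : 0 ≤ τ) :
    Phi a τ = ENNReal.ofReal (∫ u in (0:ℝ)..τ, u^(a-1) * Real.exp (-2*u)) := by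
  rw [Phi, intervalIntegral.integral_of_le hτ]
  simp only [FK]
  rw [← ofReal_integral_eq_lintegral_ofReal]
  · exact ((cont_rpow (by linarith : (0:ℝ) ≤ a-1)).mul
      (Real.continuous_exp.comp (continuous_const.mul continuous_id))).integrableOn_Ioc
  · refine (ae_restrict_iff' measurableSet_Ioc).2 (Filter.Eventually.of_forall fun u hu => ?_)
    exact mul_nonneg (Real.rpow_nonneg hu.1.le _) (Real.exp_pos _).le

lemma interval_eq_lincGamma {k τ : ℝ} (hτ : 0 ≤ τ) :
    ∫ u in (0:ℝ)..τ, u^(k-1) * Real.exp (-2*u) = (2:ℝ)^(-k) * lincGamma k (2*τ) := by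
  have h := intervalIntegral.integral_comp_mul_left
    (fun t => t^(k-1) * Real.exp (-t)) (two_ne_zero) (a := 0) (b := τ)
  simp only [mul_zero] at h
  have h2 : lincGamma k (2*τ) = 2 * ∫ x in (0:ℝ)..τ, (2*x)^(k-1) * Real.exp (-(2*x)) := by
    rw [lincGamma, h, smul_eq_mul]
    ring
  have h3 : ∫ x in (0:ℝ)..τ, (2*x)^(k-1) * Real.exp (-(2*x))
      = (2:ℝ)^(k-1) * ∫ u in (0:ℝ)..τ, u^(k-1) * Real.exp (-2*u) := by
    rw [← intervalIntegral.integral_const_mul]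
    refine intervalIntegral.integral_congr fun x hx => ?_
    rw [uIcc_of_le hτ] at hx
    rw [Real.mul_rpow (by norm_num : (0:ℝ) ≤ 2) hx.1]
    rw [show -(2*x) = -2*x by ring]
    ring
  rw [h2, h3]
  rw [show (2:ℝ) * ((2:ℝ)^(k-1) * ∫ u in (0:ℝ)..τ, u^(k-1) * Real.exp (-2*u))
      = ((2:ℝ)^(1:ℝ) * (2:ℝ)^(k-1)) * ∫ u in (0:ℝ)..τ, u^(k-1) * Real.exp (-2*u) by
    rw [Real.rpow_one]; ring]
  rw [← Real.rpow_add (by norm_num : (0:ℝ) < 2), show (1:ℝ) + (k-1) = k by ring,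
    ← mul_assoc, ← Real.rpow_add (by norm_num : (0:ℝ) < 2), show -k + k = (0:ℝ) by ring,
    Real.rpow_zero, one_mul]

lemma lincGamma_nonneg {k τ : ℝ} (hτ : 0 ≤ τ) (hk : 1 ≤ k) : 0 ≤ lincGamma k τ := by
  rw [lincGamma]
  refine intervalIntegral.integral_nonneg hτ fun u hu => ?_
  exact mul_nonneg (Real.rpow_nonneg hu.1 _) (Real.exp_pos _).le

/-- If `X₁, …, X_M` are i.i.d. nonnegative random variables with density
`f(x) = 4x K₀(2x)` on `(0,∞)`, `M = 2L` even with `L ≥ 1`, then for every `τ ≥ 0`,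
`P(∑ X_m < τ) ≤ 2^{-L} π^{M/2} Γ(3/2)^M γ(3L, 2τ) / (3L-1)!`. -/
theorem stmt7 {Ω : Type} [MeasureSpace Ω] [IsProbabilityMeasure (ℙ : Measure Ω)]
    (M L : ℕ) (hM : M = 2 * L) (hL : 0 < L)
    (X : Fin M → Ω → ℝ) (hmeas : ∀ m, Measurable (X m))
    (hnonneg : ∀ m ω, 0 ≤ X m ω)
    (hindep : iIndepFun X ℙ)
    (hdens : ∀ m, (ℙ : Measure Ω).map (X m) = volume.withDensity
      (fun x => ENNReal.ofReal ((Set.Ioi (0:ℝ)).indicator (fun y => 4 * y * K0 (2 * y)) x)))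
    (τ : ℝ) (hτ : 0 ≤ τ) :
    (ℙ {ω | (∑ m, X m ω) < τ}).toReal ≤
      (2:ℝ) ^ (-(L:ℝ)) * π ^ ((M:ℝ) / 2) * Real.Gamma (3 / 2) ^ M
        / (Nat.factorial (3 * L - 1)) * lincGamma (3 * L) (2 * τ) := by
  haveI : Nonempty (Fin M) := ⟨⟨0, by omega⟩⟩
  have hu : (Finset.univ : Finset (Fin M)).Nonempty := Finset.univ_nonempty
  have h := main_bound X hmeas hindep hdens Finset.univ hu τ
  have hcard : (Finset.univ : Finset (Fin M)).card = M := by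
    rw [Finset.card_univ, Fintype.card_fin]
  rw [hcard] at h
  have hexp : ((3*M:ℕ):ℝ)/2 = ((3*L:ℕ):ℝ) := by push_cast [hM]; ring
  have hexp' : (3*(M:ℝ))/2 = ((3*L:ℕ):ℝ) := by push_cast [hM]; ring
  rw [hexp'] at h
  have h1L : 1 ≤ ((3*L:ℕ):ℝ) := by
    have : (1:ℕ) ≤ 3*L := by omega
    exact_mod_cast this
  rw [Phi_ofReal h1L hτ, interval_eq_lincGamma hτ] at h
  rw [← ENNReal.ofReal_mul] at h
  swap
  · have h2 : (0:ℝ) < Real.Gamma (3/2) := Real.Gamma_pos_of_pos (by norm_num)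
    have h3 : (0:ℝ) < Real.Gamma ((3*L:ℕ):ℝ) := Real.Gamma_pos_of_pos (by linarith)
    positivity
  -- constant computation
  have hΓfact : Real.Gamma ((3*L:ℕ):ℝ) = (Nat.factorial (3*L-1) : ℝ) := by
    have h31 : 3*L - 1 + 1 = 3*L := by omega
    rw [← Real.Gamma_nat_eq_factorial (3*L-1)]
    congr 1
    push_cast [h31]
    have : ((3*L-1:ℕ):ℝ) = (3*L:ℝ) - 1 := by
      have : (1:ℕ) ≤ 3*L := by omega
      push_cast [Nat.cast_sub this]
      ring
    rw [this]; ring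
  have hconst : (2*Real.sqrt π)^M * Real.Gamma (3/2)^M / Real.Gamma ((3*L:ℕ):ℝ)
        * ((2:ℝ)^(-((3*L:ℕ):ℝ)) * lincGamma ((3*L:ℕ):ℝ) (2*τ))
      = (2:ℝ) ^ (-(L:ℝ)) * π ^ ((M:ℝ) / 2) * Real.Gamma (3 / 2) ^ M
        / (Nat.factorial (3 * L - 1)) * lincGamma (3 * L) (2 * τ) := by
    rw [hΓfact]
    have e1 : (2:ℝ)^(-((3*L:ℕ):ℝ)) = ((2:ℝ)^(3*L:ℕ))⁻¹ := by
      rw [Real.rpow_neg (by norm_num), Real.rpow_natCast]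
    have e2 : (2:ℝ)^(-(L:ℝ)) = ((2:ℝ)^(L:ℕ))⁻¹ := by
      rw [Real.rpow_neg (by norm_num), Real.rpow_natCast]
    have e3 : π ^ ((M:ℝ)/2) = π ^ (L:ℕ) := by
      rw [show (M:ℝ)/2 = ((L:ℕ):ℝ) by rw [hM]; push_cast; ring, Real.rpow_natCast]
    have e4 : (2*Real.sqrt π)^M = 2^M * π^(L:ℕ) := by
      rw [mul_pow]
      congr 1
      rw [hM, pow_mul, Real.sq_sqrt Real.pi_pos.le]
    rw [e1, e2, e3, e4]
    have hfact : (0:ℝ) < (Nat.factorial (3*L-1) : ℝ) := by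
      exact_mod_cast Nat.factorial_pos _
    have hpow : ((2:ℝ)^(3*L:ℕ)) = 2^M * 2^(L:ℕ) := by
      rw [← pow_add]; congr 1; omega
    field_simp
    rw [hpow]
    push_cast
    ring
  rw [hconst] at h
  have hRHS : 0 ≤ (2:ℝ) ^ (-(L:ℝ)) * π ^ ((M:ℝ) / 2) * Real.Gamma (3 / 2) ^ M
      / (Nat.factorial (3 * L - 1)) * lincGamma (3 * L) (2 * τ) := by
    have h2 : (0:ℝ) < Real.Gamma (3/2) := Real.Gamma_pos_of_pos (by norm_num)
    have h3 : 0 ≤ lincGamma (3*L) (2*τ) := lincGamma_nonneg (by linarith) (by exact_mod_cast h1L)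
    have hfact : (0:ℝ) < (Nat.factorial (3*L-1) : ℝ) := by exact_mod_cast Nat.factorial_pos _
    positivity
  calc (ℙ {ω | (∑ m, X m ω) < τ}).toReal
      ≤ (ENNReal.ofReal ((2:ℝ) ^ (-(L:ℝ)) * π ^ ((M:ℝ) / 2) * Real.Gamma (3 / 2) ^ M
          / (Nat.factorial (3 * L - 1)) * lincGamma (3 * L) (2 * τ))).toReal :=
        ENNReal.toReal_mono ENNReal.ofReal_ne_top h
    _ = _ := ENNReal.toReal_ofReal hRHS
end
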